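/- Under the echo condition, the first-order term (in t) of the short-time expansion of the decoherence function vanishes: the coefficient of t in ∑_j [exp((Γ+(−1)^N iW)a_{N+1}t)⋯exp((Γ+iW)a_1 t) y(0)]_j is zero. -/

import Mathlib

open Matrix Finset

/-- The decoherence function of a qubit under an `N`-pulse dynamical decoupling
sequence with normalized intervals `a`, rate matrix `Γ`, field values `w`, and
initial distribution `y0`. -/
noncomputable def decoherenceFn {N M : ℕ} (Γ : Matrix (Fin M) (Fin M) ℝ)
    (w : Fin M → ℝ) (y0 : Fin M → ℝ) (a : Fin (N + 1) → ℝ) (t : ℝ) : ℂ :=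
  ∑ j, (((List.ofFn fun n : Fin (N + 1) =>
      NormedSpace.exp ((a n * t) •
        ((Γ.map (Complex.ofReal)) +
          ((-1 : ℝ) ^ (n : ℕ)) • (Complex.I • Matrix.diagonal fun j => (w j : ℂ))))).reverse.prod).mulVec
      (fun j => (y0 j : ℂ))) j

/-- Derivative at `0` of a product of functions each of which equals `1` at `0`:
the derivative is the sum of the individual derivatives. -/
theorem listProd_hasDerivAt_aux {𝔸 : Type*} [NormedRing 𝔸] [NormedAlgebra ℝ 𝔸]
    (L : List ((ℝ → 𝔸) × 𝔸))
    (h : ∀ p ∈ L, HasDerivAt p.1 p.2 0 ∧ p.1 0 = 1) :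
    HasDerivAt (fun t => (L.map (fun p => p.1 t)).prod) (L.map Prod.snd).sum 0 := by
  induction L with
  | nil => simpa using hasDerivAt_const (0 : ℝ) (1 : 𝔸)
  | cons p L ih =>
    have hp := h p List.mem_cons_self
    have hL := ih (fun q hq => h q (List.mem_cons_of_mem _ hq))
    have hprod1 : (L.map (fun q => q.1 0)).prod = 1 := by
      apply List.prod_eq_one
      intro x hx
      obtain ⟨q, hq, rfl⟩ := List.mem_map.1 hx
      exact (h q (List.mem_cons_of_mem _ hq)).2
    have hmul := hp.1.mul hL
    convert hmul using 1 <;> simp [hprod1, hp.2] <;> rfl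

/-- Under the echo condition, the first-order term (coefficient of `t`) of the
short-time expansion of the decoherence function vanishes. -/
theorem first_order_term_vanishes {N M : ℕ}
    (Γ : Matrix (Fin M) (Fin M) ℝ) (hΓ : ∀ k, ∑ j, Γ j k = 0)
    (w : Fin M → ℝ)
    (y0 : Fin M → ℝ) (hy0 : ∀ j, 0 ≤ y0 j) (hy0sum : ∑ j, y0 j = 1)
    (hstat : Γ.mulVec y0 = 0)
    (a : Fin (N + 1) → ℝ) (ha : ∀ n, 0 ≤ a n) (hasum : ∑ n, a n = 1)
    (hecho : ∑ n : Fin (N + 1), (-1 : ℝ) ^ (n : ℕ) * a n = 0) :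
    deriv (fun t => decoherenceFn Γ w y0 a t) 0 = 0 := by
  classical
  letI : NormedRing (Matrix (Fin M) (Fin M) ℂ) := Matrix.linftyOpNormedRing
  letI : NormedAlgebra ℝ (Matrix (Fin M) (Fin M) ℂ) := Matrix.linftyOpNormedAlgebra
  letI : NormedAlgebra ℂ (Matrix (Fin M) (Fin M) ℂ) := Matrix.linftyOpNormedAlgebra
  set B : Fin (N + 1) → Matrix (Fin M) (Fin M) ℂ := fun n =>
    Γ.map (Complex.ofReal) +
      ((-1 : ℝ) ^ (n : ℕ)) • (Complex.I • Matrix.diagonal fun j => (w j : ℂ)) with hB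
  -- the linear functional
  let φ : Matrix (Fin M) (Fin M) ℂ →ₗ[ℂ] ℂ :=
    { toFun := fun A => ∑ j, A.mulVec (fun k => (y0 k : ℂ)) j
      map_add' := by
        intro A B
        simp [Matrix.add_mulVec, Finset.sum_add_distrib]
      map_smul' := by
        intro c A
        simp [Matrix.smul_mulVec, Finset.mul_sum] }
  let φC := LinearMap.toContinuousLinearMap φ
  have hf : ∀ n : Fin (N + 1),
      HasDerivAt (fun t : ℝ => NormedSpace.exp ((a n * t) • B n)) (a n • B n) 0 := by
    intro n
    have h1 := hasDerivAt_exp_smul_const (𝕂 := ℝ) (B n) (0 : ℝ)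
    have h2 : HasDerivAt (fun t : ℝ => a n * t) (a n) 0 := by
      simpa using (hasDerivAt_id (0 : ℝ)).const_mul (a n)
    have h3 := HasDerivAt.scomp (x := (0 : ℝ)) (by simpa using h1) h2
    have h4 := h3
    simp only [Function.comp_def] at h4
    exact h4
  let L : List ((ℝ → Matrix (Fin M) (Fin M) ℂ) × Matrix (Fin M) (Fin M) ℂ) :=
    (List.ofFn fun n => ((fun t : ℝ => NormedSpace.exp ((a n * t) • B n)), a n • B n)).reverse
  have hLmem : ∀ p ∈ L, HasDerivAt p.1 p.2 0 ∧ p.1 0 = 1 := by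
    intro p hp
    rw [List.mem_reverse, List.mem_ofFn] at hp
    obtain ⟨n, rfl⟩ := hp
    exact ⟨hf n, by simp [NormedSpace.exp_zero]⟩
  have hP := listProd_hasDerivAt_aux L hLmem
  have hD : HasDerivAt (fun t => decoherenceFn Γ w y0 a t) (φC ((L.map Prod.snd).sum)) 0 := by
    have hcomp := (φC.restrictScalars ℝ).hasFDerivAt.comp_hasDerivAt 0 hP
    have heq : (fun t => decoherenceFn Γ w y0 a t) =
        fun t => (φC.restrictScalars ℝ) ((L.map (fun p => p.1 t)).prod) := by
      funext t
      simp only [decoherenceFn, L, List.map_reverse,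
        List.map_ofFn, Function.comp_def, hB, φC, φ, ContinuousLinearMap.coe_restrictScalars',
        LinearMap.coe_toContinuousLinearMap', LinearMap.coe_mk, AddHom.coe_mk]
    rw [heq]
    exact hcomp
  have hsum : (L.map Prod.snd).sum = Γ.map (Complex.ofReal) := by
    have h1 : (L.map Prod.snd).sum = ∑ n : Fin (N + 1), a n • B n := by
      simp [L, List.map_reverse, List.sum_reverse, List.sum_ofFn]
      rw [Fin.sum_univ_succ, add_comm]
    rw [h1]
    have h2 : ∀ n : Fin (N + 1), a n • B n =
        a n • (Γ.map (Complex.ofReal)) +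
          (((-1 : ℝ) ^ (n : ℕ)) * a n) •
            (Complex.I • Matrix.diagonal fun j => (w j : ℂ)) := by
      intro n
      rw [hB]
      rw [smul_add, smul_smul, mul_comm]
    rw [Finset.sum_congr rfl (fun n _ => h2 n), Finset.sum_add_distrib,
      ← Finset.sum_smul, ← Finset.sum_smul, hasum, hecho, one_smul, zero_smul, add_zero]
  have hzero : φC (Γ.map (Complex.ofReal)) = 0 := by
    have hentry : ∀ j, ((Γ.map (Complex.ofReal)).mulVec (fun k => (y0 k : ℂ))) j
        = ((Γ.mulVec y0) j : ℂ) := by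
      intro j
      simp [Matrix.mulVec, dotProduct, Matrix.map_apply]
    simp only [φC, φ, LinearMap.coe_toContinuousLinearMap', LinearMap.coe_mk, AddHom.coe_mk]
    simp [hentry, hstat]
  rw [hD.deriv, hsum, hzero]
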